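/- A random-unitary qubit channel M(ρ) = Σᵢ pᵢ Uᵢ ρ Uᵢ†, with all pᵢ > 0 and Uᵢ unitary on ℂ², is ergodic if and only if there exist indices i, j with Uᵢ Uⱼ ≠ Uⱼ Uᵢ. -/

import Mathlib

open Matrix
open scoped ComplexOrder

noncomputable section

abbrev Mat (d : ℕ) := Matrix (Fin d) (Fin d) ℂ

/-- `K` is a Kraus representation of the linear map `Φ`. -/
def IsKrausRep {d : ℕ} (Φ : Mat d →ₗ[ℂ] Mat d) {n : ℕ} (K : Fin n → Mat d) : Prop :=
  (∀ A, Φ A = ∑ i, K i * A * (K i)ᴴ) ∧ ∑ i, (K i)ᴴ * K i = 1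

/-- A quantum channel: completely positive trace-preserving map, i.e. admitting a Kraus
representation with the normalization condition. -/
def IsCPTP {d : ℕ} (Φ : Mat d →ₗ[ℂ] Mat d) : Prop :=
  ∃ (n : ℕ) (K : Fin n → Mat d), IsKrausRep Φ K

/-- A density matrix: positive semidefinite with unit trace. -/
def IsDensity {d : ℕ} (ρ : Mat d) : Prop := ρ.PosSemidef ∧ ρ.trace = 1

/-- Ergodicity: the channel has a unique fixed point density matrix. -/
def IsErgodic {d : ℕ} (Φ : Mat d →ₗ[ℂ] Mat d) : Prop :=
  ∃! ρ : Mat d, IsDensity ρ ∧ Φ ρ = ρ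

/-- The support of an operator, viewed as a subspace of `ℂ^d`. -/
def supp {d : ℕ} (ρ : Mat d) : Submodule ℂ (Fin d → ℂ) := LinearMap.range ρ.mulVecLin

/-- The positive semidefinite square root (as `Matrix.PosSemidef.sqrt` was defined in Mathlib, Dec 2024). -/
def Matrix.PosSemidef.sqrt {n : Type*} [Fintype n] [DecidableEq n] {A : Matrix n n ℂ}
    (hA : A.PosSemidef) : Matrix n n ℂ :=
  (hA.1.eigenvectorUnitary : Matrix n n ℂ) *
    diagonal (fun i => ((√(hA.1.eigenvalues i) : ℝ) : ℂ)) *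
    (star hA.1.eigenvectorUnitary : Matrix n n ℂ)

/-- The trace norm `‖A‖₁ = Tr √(A†A)`. -/
def traceNorm {d : ℕ} (A : Mat d) : ℝ :=
  ((Matrix.posSemidef_conjTranspose_mul_self A).sqrt.trace).re

/-- Mixing: iterates of the channel converge in trace norm to a unique state. -/
def IsMixing {d : ℕ} (Φ : Mat d →ₗ[ℂ] Mat d) : Prop :=
  ∃ ρs : Mat d, IsDensity ρs ∧ ∀ ρ : Mat d, IsDensity ρ →
    Filter.Tendsto (fun k : ℕ => traceNorm ((Φ ^ k) ρ - ρs)) Filter.atTop (nhds 0)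

/-- A subspace `S` is invariant for a channel if every Kraus operator (of any Kraus
representation) maps `S` into itself. -/
def IsInvariantSubspace {d : ℕ} (Φ : Mat d →ₗ[ℂ] Mat d) (S : Submodule ℂ (Fin d → ℂ)) : Prop :=
  ∀ (n : ℕ) (K : Fin n → Mat d), IsKrausRep Φ K → ∀ i, ∀ x ∈ S, (K i).mulVec x ∈ S

lemma comm_entries {σ A : Mat 2} (htr : σ.trace = 0) (h : A * σ = σ * A) :
    A 0 1 * σ 1 0 = σ 0 1 * A 1 0 ∧
    σ 0 1 * (A 0 0 - A 1 1) = 2 * (σ 0 0 * A 0 1) ∧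
    2 * (σ 0 0 * A 1 0) = σ 1 0 * (A 0 0 - A 1 1) := by
  have h11 : σ 1 1 = -σ 0 0 := by
    have := htr
    simp only [Matrix.trace, Matrix.diag, Fin.sum_univ_two] at this
    linear_combination this
  have e00 := congrFun (congrFun h 0) 0
  have e01 := congrFun (congrFun h 0) 1
  have e10 := congrFun (congrFun h 1) 0
  simp only [Matrix.mul_apply, Fin.sum_univ_two, h11] at e00 e01 e10
  refine ⟨by linear_combination e00, by linear_combination e01, by linear_combination e10⟩

/-- Two matrices commuting with a nonzero traceless 2×2 matrix commute with each other. -/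

lemma comm2 {σ A B : Mat 2} (htr : σ.trace = 0) (hσ : σ ≠ 0)
    (hA : A * σ = σ * A) (hB : B * σ = σ * B) : A * B = B * A := by
  obtain ⟨a1, a2, a3⟩ := comm_entries htr hA
  obtain ⟨b1, b2, b3⟩ := comm_entries htr hB
  have h11 : σ 1 1 = -σ 0 0 := by
    have := htr
    simp only [Matrix.trace, Matrix.diag, Fin.sum_univ_two] at this
    linear_combination this
  set x := σ 0 0 with hx
  set z := σ 0 1 with hz
  set w := σ 1 0 with hw
  set a := A 0 0; set b := A 0 1; set c := A 1 0; set d := A 1 1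
  set a' := B 0 0; set b' := B 0 1; set c' := B 1 0; set d' := B 1 1
  -- goals needed
  have key1 : b * c' = b' * c ∧ b' * (a - d) = b * (a' - d') ∧ c * (a' - d') = c' * (a - d) := by
    by_cases hx0 : x = 0
    · rw [hx0] at a2 a3 b2 b3
      simp only [mul_zero, zero_mul] at a2 a3 b2 b3
      -- z*(a-d)=0, w*(a-d)=0 (from a3 : 0 = w*(a-d)), same primed
      by_cases hz0 : z = 0
      · by_cases hw0 : w = 0
        · exfalso; apply hσ; ext i j
          fin_cases i <;> fin_cases j <;>
            simp [← hx, ← hz, ← hw, hx0, hz0, hw0, h11]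
        · -- w ≠ 0 : from a1 : b*w = 0 → b = 0 ; from a3 : w*(a-d)=0 → a=d
          rw [hz0] at a1 b1 a2 b2
          simp only [zero_mul] at a1 b1
          have hb : b = 0 := by
            rcases mul_eq_zero.1 a1 with h' | h'; exact h'; exact absurd h' hw0
          have hb' : b' = 0 := by
            rcases mul_eq_zero.1 b1 with h' | h'; exact h'; exact absurd h' hw0
          have had : a - d = 0 := by
            rcases mul_eq_zero.1 a3.symm with h' | h'; exact absurd h' hw0; exact h'
          have had' : a' - d' = 0 := by
            rcases mul_eq_zero.1 b3.symm with h' | h'; exact absurd h' hw0; exact h'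
          refine ⟨by rw [hb, hb']; ring, by rw [hb, hb']; ring, by rw [had, had']; ring⟩
      · -- z ≠ 0 : a2 : z*(a-d) = 0 → a = d; primed same; a1 : b*w = z*c
        have had : a - d = 0 := by
          rcases mul_eq_zero.1 a2 with h' | h'; exact absurd h' hz0; exact h'
        have had' : a' - d' = 0 := by
          rcases mul_eq_zero.1 b2 with h' | h'; exact absurd h' hz0; exact h'
        refine ⟨?_, by rw [had, had']; ring, by rw [had, had']; ring⟩
        -- b*c' = b'*c : z*(b*c') = b*(z*c') = b*(b'*w) = b'*(b*w) = b'*(z*c)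
        apply mul_left_cancel₀ hz0
        linear_combination b * b1.symm + b' * a1
    · -- x ≠ 0
      have h2x : (2 : ℂ) * x ≠ 0 := by
        simp [hx0]
      constructor
      · apply mul_left_cancel₀ h2x; apply mul_left_cancel₀ h2x
        linear_combination (-(2*x*c')) * a2 + (z*(a-d)) * b3 + (2*x*c) * b2 + (-(z*(a'-d'))) * a3
      constructor
      · apply mul_left_cancel₀ h2x
        linear_combination (a'-d') * a2 - (a-d) * b2
      · apply mul_left_cancel₀ h2x
        linear_combination (a'-d') * a3 - (a-d) * b3
  obtain ⟨k1, k2, k3⟩ := key1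
  ext i j
  fin_cases i <;> fin_cases j <;>
    simp only [Matrix.mul_apply, Fin.sum_univ_two, Fin.mk_zero, Fin.mk_one, Fin.isValue]
  · linear_combination k1
  · linear_combination k2
  · linear_combination k3
  · linear_combination -k1

lemma posSemidef_two {M : Mat 2} (hH : M.IsHermitian)
    (ha : 0 ≤ (M 0 0).re) (hd : 0 ≤ (M 1 1).re)
    (hdet : Complex.normSq (M 0 1) ≤ (M 0 0).re * (M 1 1).re) :
    M.PosSemidef := by
  refine Matrix.posSemidef_iff_dotProduct_mulVec.2 ⟨hH, fun x => ?_⟩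
  have h10 : M 1 0 = starRingEnd ℂ (M 0 1) := by
    have := congrFun (congrFun (Matrix.IsHermitian.eq hH) 1) 0
    simp only [Matrix.conjTranspose_apply] at this
    exact this.symm
  have h00 : M 0 0 = ((M 0 0).re : ℂ) := by
    have := congrFun (congrFun (Matrix.IsHermitian.eq hH) 0) 0
    simp only [Matrix.conjTranspose_apply] at this
    exact (Complex.conj_eq_iff_re.1 this).symm
  have h11 : M 1 1 = ((M 1 1).re : ℂ) := by
    have := congrFun (congrFun (Matrix.IsHermitian.eq hH) 1) 1
    simp only [Matrix.conjTranspose_apply] at this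
    exact (Complex.conj_eq_iff_re.1 this).symm
  have key : dotProduct (star x) (M *ᵥ x)
      = star (x 0) * (M 0 0 * x 0 + M 0 1 * x 1) + star (x 1) * (M 1 0 * x 0 + M 1 1 * x 1) := by
    simp [dotProduct, Matrix.mulVec, Fin.sum_univ_two, mul_comm]
  rw [key, h10, h00, h11]
  set a := (M 0 0).re with hA
  set d := (M 1 1).re with hD
  set e := (M 0 1).re with hE
  set f := (M 0 1).im with hF
  have hz : M 0 1 = Complex.mk e f := rfl
  have hx0 : x 0 = Complex.mk ((x 0).re) ((x 0).im) := rfl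
  have hx1 : x 1 = Complex.mk ((x 1).re) ((x 1).im) := rfl
  set p := (x 0).re with hP
  set q := (x 0).im with hQ
  set r := (x 1).re with hR
  set s := (x 1).im with hS
  have hdet' : e^2 + f^2 ≤ a * d := by
    have h2 : Complex.normSq (M 0 1) = e^2 + f^2 := by
      simp [Complex.normSq_apply, hz]; ring
    linarith [hdet, h2.ge, h2.le]
  rw [hz, hx0, hx1, Complex.nonneg_iff]
  constructor
  · simp only [Complex.add_re, Complex.mul_re, Complex.mul_im, Complex.add_im,
      Complex.ofReal_re, Complex.ofReal_im, RingHom.coe_coe, Complex.conj_re, Complex.conj_im,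
      Pi.star_apply, RCLike.star_def]
    rcases eq_or_lt_of_le (add_nonneg ha hd) with had | had
    · have ha0 : a = 0 := by linarith
      have hd0 : d = 0 := by linarith
      have he0 : e = 0 := by nlinarith [sq_nonneg e, sq_nonneg f]
      have hf0 : f = 0 := by nlinarith [sq_nonneg e, sq_nonneg f]
      rw [ha0, hd0, he0, hf0]; nlinarith [sq_nonneg p]
    · nlinarith [sq_nonneg (a*p + e*r - f*s), sq_nonneg (a*q + f*r + e*s),
        sq_nonneg (d*r + e*p + f*q), sq_nonneg (d*s + e*q - f*p),
        mul_nonneg (sub_nonneg.2 hdet') (add_nonneg (add_nonneg (sq_nonneg p) (sq_nonneg q)) (add_nonneg (sq_nonneg r) (sq_nonneg s))),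
        sq_nonneg p, sq_nonneg q, sq_nonneg r, sq_nonneg s, mul_nonneg ha hd, had]
  · simp only [Complex.add_re, Complex.mul_re, Complex.mul_im, Complex.add_im,
      Complex.ofReal_re, Complex.ofReal_im, RingHom.coe_coe, Complex.conj_re, Complex.conj_im,
      Pi.star_apply, RCLike.star_def]
    ring

lemma trace_ct {d : ℕ} (D : Mat d) :
    (Dᴴ * D).trace = ((∑ j, ∑ i, Complex.normSq (D i j) : ℝ) : ℂ) := by
  simp only [Matrix.trace, Matrix.diag, Matrix.mul_apply, Matrix.conjTranspose_apply]
  push_cast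
  refine Finset.sum_congr rfl fun j _ => Finset.sum_congr rfl fun i _ => ?_
  rw [Complex.normSq_eq_conj_mul_self]
  rfl

lemma fixed_commutes {m : ℕ} (p : Fin m → ℝ) (U : Fin m → Mat 2)
    (hp : ∀ i, 0 < p i) (hsum : ∑ i, p i = 1)
    (hU : ∀ i, U i ∈ Matrix.unitaryGroup (Fin 2) ℂ)
    {ρ : Mat 2} (hρH : ρ.IsHermitian)
    (hfix : ∑ i, (p i : ℂ) • (U i * ρ * (U i)ᴴ) = ρ) :
    ∀ i, U i * ρ = ρ * U i := by
  have hU1 : ∀ i, (U i)ᴴ * U i = 1 := by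
    intro i
    have := (Matrix.mem_unitaryGroup_iff').mp (hU i)
    rwa [Matrix.star_eq_conjTranspose] at this
  have hU2 : ∀ i, U i * (U i)ᴴ = 1 := by
    intro i
    have := (Matrix.mem_unitaryGroup_iff).mp (hU i)
    rwa [Matrix.star_eq_conjTranspose] at this
  set A : Fin m → Mat 2 := fun i => U i * ρ * (U i)ᴴ with hAdef
  have hAH : ∀ i, (A i)ᴴ = A i := by
    intro i
    simp only [hAdef, Matrix.conjTranspose_mul, Matrix.conjTranspose_conjTranspose, hρH.eq]
    rw [Matrix.mul_assoc]
  set D : Fin m → Mat 2 := fun i => A i - ρ with hDdef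
  have hAA : ∀ i, (A i * A i).trace = (ρ * ρ).trace := by
    intro i
    have h1 : A i * A i = U i * (ρ * ρ) * (U i)ᴴ := by
      simp only [hAdef]
      calc U i * ρ * (U i)ᴴ * (U i * ρ * (U i)ᴴ)
          = U i * ρ * ((U i)ᴴ * U i) * ρ * (U i)ᴴ := by
            simp only [Matrix.mul_assoc]
        _ = U i * (ρ * ρ) * (U i)ᴴ := by rw [hU1 i]; simp only [Matrix.mul_one, Matrix.mul_assoc]
    rw [h1, Matrix.trace_mul_cycle, ← Matrix.mul_assoc, hU1 i, Matrix.one_mul]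
  have htr : ∀ i, ((D i)ᴴ * D i).trace
      = 2 * (ρ * ρ).trace - 2 * (ρ * A i).trace := by
    intro i
    have : (D i)ᴴ * D i = A i * A i - A i * ρ - ρ * A i + ρ * ρ := by
      simp only [hDdef, Matrix.conjTranspose_sub, hAH, hρH.eq, Matrix.sub_mul, Matrix.mul_sub]
      abel
    rw [this, Matrix.trace_add, Matrix.trace_sub, Matrix.trace_sub, hAA i,
      Matrix.trace_mul_comm (A i) ρ]
    ring
  have hsumc : (∑ i, (p i : ℂ)) = 1 := by
    rw [← Complex.ofReal_sum]
    rw [hsum, Complex.ofReal_one]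
  have hT : ∑ i, (p i : ℂ) * ((D i)ᴴ * D i).trace = 0 := by
    have hmix : ∑ i, (p i : ℂ) * (ρ * A i).trace = (ρ * ρ).trace := by
      calc ∑ i, (p i : ℂ) * (ρ * A i).trace
          = (ρ * ∑ i, (p i : ℂ) • A i).trace := by
            rw [Matrix.mul_sum, Matrix.trace_sum]
            refine Finset.sum_congr rfl fun i _ => ?_
            rw [Matrix.mul_smul, Matrix.trace_smul, smul_eq_mul]
        _ = (ρ * ρ).trace := by rw [hfix]
    calc ∑ i, (p i : ℂ) * ((D i)ᴴ * D i).trace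
        = ∑ i, ((p i : ℂ) * (2 * (ρ * ρ).trace) - (p i : ℂ) * (2 * (ρ * A i).trace)) := by
          refine Finset.sum_congr rfl fun i _ => ?_
          rw [htr i]; ring
      _ = (∑ i, (p i : ℂ)) * (2 * (ρ * ρ).trace) - 2 * ∑ i, (p i : ℂ) * (ρ * A i).trace := by
          rw [Finset.sum_sub_distrib, ← Finset.sum_mul, Finset.mul_sum]
          congr 1
          refine Finset.sum_congr rfl fun i _ => by ring
      _ = 0 := by rw [hsumc, hmix]; ring
  -- now conclude each D i = 0
  have hDzero : ∀ i, D i = 0 := by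
    set r : Fin m → ℝ := fun i => ∑ j, ∑ k, Complex.normSq (D i k j) with hrdef
    have hr0 : ∀ i, 0 ≤ r i := fun i =>
      Finset.sum_nonneg fun j _ => Finset.sum_nonneg fun k _ => Complex.normSq_nonneg _
    have hTr : ∑ i, p i * r i = 0 := by
      have : ((∑ i, p i * r i : ℝ) : ℂ) = 0 := by
        push_cast
        rw [← hT]
        refine Finset.sum_congr rfl fun i _ => ?_
        rw [trace_ct (D i)]
      exact_mod_cast this
    intro i
    have hri : p i * r i = 0 := by
      have := (Finset.sum_eq_zero_iff_of_nonneg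
        (fun i _ => mul_nonneg (hp i).le (hr0 i))).1 hTr i (Finset.mem_univ i)
      exact this
    have hri0 : r i = 0 := by
      rcases mul_eq_zero.1 hri with h | h
      · exact absurd h (hp i).ne'
      · exact h
    have : ((D i)ᴴ * D i).trace = 0 := by
      rw [trace_ct (D i)]
      exact_mod_cast congrArg (Complex.ofReal) hri0
    -- entries zero
    ext k j
    have h2 : ∀ j ∈ Finset.univ, ∀ k ∈ Finset.univ, Complex.normSq (D i k j) = 0 := by
      intro j _
      have hj := (Finset.sum_eq_zero_iff_of_nonneg
        (fun j _ => Finset.sum_nonneg fun k _ => Complex.normSq_nonneg _)).1 hri0 j (Finset.mem_univ j)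
      exact fun k _ => (Finset.sum_eq_zero_iff_of_nonneg
        (fun k _ => Complex.normSq_nonneg _)).1 hj k (Finset.mem_univ k)
    simpa using Complex.normSq_eq_zero.1 (h2 j (Finset.mem_univ j) k (Finset.mem_univ k))
  intro i
  have hfixi : U i * ρ * (U i)ᴴ = ρ := by
    have := hDzero i
    simpa [hDdef, sub_eq_zero, hAdef] using this
  calc U i * ρ = U i * ρ * ((U i)ᴴ * U i) := by rw [hU1 i, Matrix.mul_one]
    _ = (U i * ρ * (U i)ᴴ) * U i := by simp only [Matrix.mul_assoc]
    _ = ρ * U i := by rw [hfixi]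

lemma half_add_density {τ : Mat 2} (hH : τ.IsHermitian) (htr : τ.trace = 0) (η : ℝ)
    (hsmall : η^2 * (((τ 0 0).re)^2 + Complex.normSq (τ 0 1)) ≤ 1/4) :
    ((1/2 : ℂ) • (1 : Mat 2) + (η : ℂ) • τ).PosSemidef ∧
    ((1/2 : ℂ) • (1 : Mat 2) + (η : ℂ) • τ).trace = 1 := by
  set x := (τ 0 0).re with hxdef
  have h00 : τ 0 0 = (x : ℂ) := by
    have := congrFun (congrFun hH.eq 0) 0
    simp only [Matrix.conjTranspose_apply] at this
    exact (Complex.conj_eq_iff_re.1 this).symm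
  have h11 : τ 1 1 = -(x : ℂ) := by
    have ht := htr
    simp only [Matrix.trace, Matrix.diag, Fin.sum_univ_two] at ht
    rw [← h00]; linear_combination ht
  set M := (1/2 : ℂ) • (1 : Mat 2) + (η : ℂ) • τ with hMdef
  have hM00 : M 0 0 = ((1/2 + η * x : ℝ) : ℂ) := by
    simp only [hMdef, Matrix.add_apply, Matrix.smul_apply, Matrix.one_apply_eq, h00]
    push_cast [smul_eq_mul]; ring
  have hM11 : M 1 1 = ((1/2 - η * x : ℝ) : ℂ) := by
    simp only [hMdef, Matrix.add_apply, Matrix.smul_apply, Matrix.one_apply_eq, h11]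
    push_cast [smul_eq_mul]; ring
  have hM01 : M 0 1 = (η : ℂ) * τ 0 1 := by
    simp only [hMdef, Matrix.add_apply, Matrix.smul_apply]
    rw [Matrix.one_apply_ne (by decide)]
    rw [smul_eq_mul, smul_eq_mul]; ring
  have hMH : M.IsHermitian := by
    rw [Matrix.IsHermitian, hMdef]
    rw [Matrix.conjTranspose_add, Matrix.conjTranspose_smul, Matrix.conjTranspose_smul,
      Matrix.conjTranspose_one, hH.eq]
    congr 1
    · congr 1
      simp [Complex.ext_iff]
    · congr 1
      exact Complex.conj_ofReal η
  have habs : (η * x)^2 ≤ 1/4 := by nlinarith [Complex.normSq_nonneg (τ 0 1), sq_nonneg η]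
  have hax : |η * x| ≤ 1/2 := by
    rw [abs_le]
    constructor <;> nlinarith [abs_nonneg (η*x), sq_abs (η*x)]
  refine ⟨posSemidef_two hMH ?_ ?_ ?_, ?_⟩
  · rw [hM00, Complex.ofReal_re]
    cases' abs_le.1 hax with h1 h2; linarith
  · rw [hM11, Complex.ofReal_re]
    cases' abs_le.1 hax with h1 h2; linarith
  · rw [hM00, hM11, hM01, Complex.ofReal_re, Complex.ofReal_re]
    rw [Complex.normSq_mul]
    have : Complex.normSq ((η : ℂ)) = η^2 := by
      rw [Complex.normSq_ofReal]; ring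
    rw [this]
    nlinarith [Complex.normSq_nonneg (τ 0 1)]
  · rw [hMdef, Matrix.trace_add, Matrix.trace_smul, Matrix.trace_smul, htr, Matrix.trace_one]
    simp

/-- A random-unitary qubit channel is ergodic if and only if at least two of the unitaries do
not commute. -/
theorem randomUnitary_qubit_ergodic_iff {m : ℕ} (p : Fin m → ℝ) (U : Fin m → Mat 2)
    (hp : ∀ i, 0 < p i) (hsum : ∑ i, p i = 1)
    (hU : ∀ i, U i ∈ Matrix.unitaryGroup (Fin 2) ℂ)
    (Φ : Mat 2 →ₗ[ℂ] Mat 2)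
    (hΦ : ∀ A : Mat 2, Φ A = ∑ i, (p i : ℂ) • (U i * A * (U i)ᴴ)) :
    IsErgodic Φ ↔ ∃ i j, U i * U j ≠ U j * U i := by
  have hU1 : ∀ i, (U i)ᴴ * U i = 1 := fun i => by
    have := Matrix.mem_unitaryGroup_iff'.mp (hU i)
    rwa [Matrix.star_eq_conjTranspose] at this
  have hU2 : ∀ i, U i * (U i)ᴴ = 1 := fun i => by
    have := Matrix.mem_unitaryGroup_iff.mp (hU i)
    rwa [Matrix.star_eq_conjTranspose] at this
  have hsumc : (∑ i, (p i : ℂ)) = 1 := by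
    rw [← Complex.ofReal_sum, hsum, Complex.ofReal_one]
  have hfix_of_comm : ∀ ρ : Mat 2, (∀ i, U i * ρ = ρ * U i) → Φ ρ = ρ := by
    intro ρ hcom
    rw [hΦ]
    calc ∑ i, (p i : ℂ) • (U i * ρ * (U i)ᴴ)
        = ∑ i, (p i : ℂ) • ρ := by
          refine Finset.sum_congr rfl fun i _ => ?_
          rw [hcom i, Matrix.mul_assoc, hU2 i, Matrix.mul_one]
      _ = (∑ i, (p i : ℂ)) • ρ := by rw [Finset.sum_smul]
      _ = ρ := by rw [hsumc, one_smul]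
  have hhalf0 := half_add_density (τ := (0 : Mat 2))
    (by simp [Matrix.IsHermitian]) (by simp) 0 (by norm_num)
  rw [smul_zero, add_zero] at hhalf0
  have hhalfD : IsDensity ((1/2 : ℂ) • (1 : Mat 2)) := ⟨hhalf0.1, hhalf0.2⟩
  constructor
  · -- ergodic → exists noncommuting pair
    intro hE
    by_contra hcon
    push_neg at hcon
    -- Step 1: find a hermitian traceless nonzero τ commuting with every U i
    obtain ⟨τ, hτH, hτtr, hτ0, hτcomm⟩ :
        ∃ τ : Mat 2, τ.IsHermitian ∧ τ.trace = 0 ∧ τ ≠ 0 ∧ ∀ i, U i * τ = τ * U i := by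
      by_cases hsc : ∀ i, ∃ c : ℂ, U i = c • (1 : Mat 2)
      · refine ⟨!![1, 0; 0, -1], ?_, ?_, ?_, ?_⟩
        · ext i j
          fin_cases i <;> fin_cases j <;>
            simp [Matrix.conjTranspose_apply]
        · simp [Matrix.trace, Matrix.diag, Fin.sum_univ_two]
        · intro h
          have := congrFun (congrFun h 0) 0
          simp at this
        · intro i
          obtain ⟨c, hc⟩ := hsc i
          rw [hc, smul_mul_assoc, one_mul, mul_smul_comm, mul_one]
      · push_neg at hsc
        obtain ⟨i₀, hW⟩ := hsc
        set W := U i₀ with hWdef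
        set σ := W - ((W.trace / 2) • 1) with hσdef
        have htrσ : σ.trace = 0 := by
          rw [hσdef, Matrix.trace_sub, Matrix.trace_smul, Matrix.trace_one]
          simp
        have hσ0 : σ ≠ 0 := by
          intro h
          rw [hσdef, sub_eq_zero] at h
          exact hW _ h
        have hWW : W * Wᴴ = Wᴴ * W := (hU2 i₀).trans (hU1 i₀).symm
        set H := W + Wᴴ with hHdef
        set K := Complex.I • (W - Wᴴ) with hKdef
        have hHW : H * W = W * H := by
          rw [hHdef, add_mul, mul_add, ← hWW]
        have hKW : K * W = W * K := by
          rw [hKdef, smul_mul_assoc, mul_smul_comm, sub_mul, mul_sub, ← hWW]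
        have hHH : Hᴴ = H := by
          rw [hHdef, Matrix.conjTranspose_add, Matrix.conjTranspose_conjTranspose, add_comm]
        have hKH : Kᴴ = K := by
          rw [hKdef, Matrix.conjTranspose_smul, Matrix.conjTranspose_sub,
            Matrix.conjTranspose_conjTranspose]
          rw [show star Complex.I = -Complex.I from Complex.conj_I]
          rw [neg_smul, ← smul_neg, neg_sub]
        -- helper machinery for the two candidates
        have hcenter : ∀ M : Mat 2, (M - ((M.trace / 2) • 1)).trace = 0 := by
          intro M
          rw [Matrix.trace_sub, Matrix.trace_smul, Matrix.trace_one]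
          simp
        have hherm : ∀ M : Mat 2, Mᴴ = M → ((M - ((M.trace / 2) • 1)) : Mat 2).IsHermitian := by
          intro M hM
          have hstar : star M.trace = M.trace := by
            rw [← Matrix.trace_conjTranspose, hM]
          rw [Matrix.IsHermitian, Matrix.conjTranspose_sub, hM, Matrix.conjTranspose_smul,
            Matrix.conjTranspose_one]
          congr 1
          rw [star_div₀, hstar]
          norm_num
        have hcommσ : ∀ X : Mat 2, X * W = W * X → X * σ = σ * X := by
          intro X hX
          simp only [hσdef, Matrix.mul_sub, Matrix.sub_mul, hX, mul_smul_comm, smul_mul_assoc,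
            Matrix.mul_one, Matrix.one_mul]
        have hUW : ∀ i, U i * W = W * U i := fun i => hcon i i₀
        have build : ∀ τ' : Mat 2, τ'.IsHermitian → τ'.trace = 0 → τ' ≠ 0 →
            (τ' * W = W * τ') →
            ∃ τ : Mat 2, τ.IsHermitian ∧ τ.trace = 0 ∧ τ ≠ 0 ∧ ∀ i, U i * τ = τ * U i := by
          intro τ' h1 h2 h3 h4
          exact ⟨τ', h1, h2, h3, fun i =>
            comm2 htrσ hσ0 (hcommσ (U i) (hUW i)) (hcommσ τ' h4)⟩
        by_cases hτH0 : H - ((H.trace / 2) • 1) = (0 : Mat 2)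
        · -- then the K-candidate must be nonzero
          by_cases hτK0 : K - ((K.trace / 2) • 1) = (0 : Mat 2)
          · exfalso
            rw [sub_eq_zero] at hτH0 hτK0
            have h2' : W - Wᴴ = ((-Complex.I) * (K.trace / 2)) • 1 := by
              have : (-Complex.I) • K = W - Wᴴ := by
                rw [hKdef, smul_smul]
                have : -Complex.I * Complex.I = 1 := by
                  simp [Complex.I_mul_I]
                rw [this, one_smul]
              rw [← this, ← smul_smul, ← hτK0]
            have h3' : (2 : ℂ) • W = (H.trace / 2) • (1 : Mat 2)
                + ((-Complex.I) * (K.trace / 2)) • 1 := by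
              rw [two_smul]
              calc W + W = (W + Wᴴ) + (W - Wᴴ) := by abel
                _ = _ := by rw [h2', ← hHdef, ← hτH0]
            apply hW ((H.trace / 2 + (-Complex.I) * (K.trace / 2)) / 2)
            have h5 : (2 : ℂ) • W
                = (2 : ℂ) • (((H.trace / 2 + (-Complex.I) * (K.trace / 2)) / 2) • (1 : Mat 2)) := by
              rw [h3', smul_smul, ← add_smul]
              congr 1
              ring
            exact smul_right_injective (Mat 2) (by norm_num : (2:ℂ) ≠ 0) h5
          · refine build _ (hherm K hKH) (hcenter K) hτK0 ?_
            simp only [Matrix.sub_mul, Matrix.mul_sub, hKW, smul_mul_assoc, mul_smul_comm,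
              Matrix.one_mul, Matrix.mul_one]
        · refine build _ (hherm H hHH) (hcenter H) hτH0 ?_
          simp only [Matrix.sub_mul, Matrix.mul_sub, hHW, smul_mul_assoc, mul_smul_comm,
            Matrix.one_mul, Matrix.mul_one]
    -- Step 2: build two distinct fixed densities from τ
    have h00 : τ 0 0 = (((τ 0 0).re : ℝ) : ℂ) := by
      have := congrFun (congrFun hτH.eq 0) 0
      simp only [Matrix.conjTranspose_apply] at this
      exact (Complex.conj_eq_iff_re.1 this).symm
    have h10 : τ 1 0 = starRingEnd ℂ (τ 0 1) := by
      have := congrFun (congrFun hτH.eq 1) 0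
      simp only [Matrix.conjTranspose_apply] at this
      exact this.symm
    have h11 : τ 1 1 = -τ 0 0 := by
      have ht := hτtr
      simp only [Matrix.trace, Matrix.diag, Fin.sum_univ_two] at ht
      linear_combination ht
    set x := (τ 0 0).re with hxdef
    set n := Complex.normSq (τ 0 1) with hndef
    have hc : 0 < x ^ 2 + n := by
      rcases lt_or_eq_of_le (add_nonneg (sq_nonneg x) (Complex.normSq_nonneg (τ 0 1))) with h | h
      · exact h
      · exfalso
        have hx0 : x = 0 := by nlinarith [sq_nonneg x, Complex.normSq_nonneg (τ 0 1)]
        have hn0 : Complex.normSq (τ 0 1) = 0 := by nlinarith [sq_nonneg x, Complex.normSq_nonneg (τ 0 1)]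
        have hτ01 : τ 0 1 = 0 := Complex.normSq_eq_zero.1 hn0
        apply hτ0
        ext i j
        fin_cases i <;> fin_cases j <;>
          simp [h00, ← hxdef, hx0, hτ01, h11, h10]
    set s := Real.sqrt (x ^ 2 + n) with hsdef
    have hs : 0 < s := Real.sqrt_pos.2 hc
    have hs2 : s ^ 2 = x ^ 2 + n := Real.sq_sqrt hc.le
    set η : ℝ := 1 / (2 * s) with hηdef
    have hη0 : η ≠ 0 := by
      rw [hηdef]
      positivity
    have hsmall : η ^ 2 * (x ^ 2 + n) ≤ 1 / 4 := by
      rw [hηdef, ← hs2]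
      have heq : (1 / (2 * s)) ^ 2 * s ^ 2 = 1 / 4 := by
        field_simp [hs.ne']
        ring
      exact le_of_eq heq
    have hsmall' : (-η) ^ 2 * (x ^ 2 + n) ≤ 1 / 4 := by
      rw [neg_pow]
      simpa using hsmall
    have hDP := half_add_density hτH hτtr η hsmall
    have hDM := half_add_density hτH hτtr (-η) hsmall'
    set ρP := (1/2 : ℂ) • (1 : Mat 2) + (η : ℂ) • τ with hρP
    set ρM := (1/2 : ℂ) • (1 : Mat 2) + ((-η : ℝ) : ℂ) • τ with hρM
    have hcomm : ∀ (c : ℂ) (i), U i * ((1/2 : ℂ) • (1 : Mat 2) + c • τ)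
        = ((1/2 : ℂ) • (1 : Mat 2) + c • τ) * U i := by
      intro c i
      simp only [Matrix.mul_add, Matrix.add_mul, mul_smul_comm, smul_mul_assoc,
        Matrix.mul_one, Matrix.one_mul, hτcomm i]
    obtain ⟨ρs, _, huniq⟩ := hE
    have hP := huniq ρP ⟨⟨hDP.1, hDP.2⟩, hfix_of_comm _ (hcomm _)⟩
    have hM := huniq ρM ⟨⟨hDM.1, hDM.2⟩, hfix_of_comm _ (hcomm _)⟩
    have heq : ρP = ρM := hP.trans hM.symm
    rw [hρP, hρM] at heq
    have heq2 : ((η : ℂ) - ((-η : ℝ) : ℂ)) • τ = 0 := by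
      rw [sub_smul, sub_eq_zero]
      exact add_left_cancel heq
    rcases smul_eq_zero.1 heq2 with h | h
    · apply hη0
      have : ((2 * η : ℝ) : ℂ) = 0 := by
        push_cast
        rw [← h]
        push_cast
        ring
      have h2 : (2 : ℝ) * η = 0 := by exact_mod_cast this
      linarith
    · exact hτ0 h
  · -- noncommuting pair → ergodic
    rintro ⟨i, j, hij⟩
    refine ⟨(1/2 : ℂ) • (1 : Mat 2),
      ⟨hhalfD, hfix_of_comm _ (fun k => by
        rw [mul_smul_comm, smul_mul_assoc, Matrix.mul_one, Matrix.one_mul])⟩, ?_⟩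
    rintro ρ ⟨⟨hρPSD, hρtr⟩, hρfix⟩
    have hρH : ρ.IsHermitian := hρPSD.1
    have hfixρ : ∑ k, (p k : ℂ) • (U k * ρ * (U k)ᴴ) = ρ := by
      rw [← hΦ ρ]
      exact hρfix
    have hcommρ := fixed_commutes p U hp hsum hU hρH hfixρ
    set σ := ρ - (1/2 : ℂ) • (1 : Mat 2) with hσdef
    have htrσ : σ.trace = 0 := by
      rw [hσdef, Matrix.trace_sub, hρtr, Matrix.trace_smul, Matrix.trace_one]
      simp
    by_cases hσ0 : σ = 0
    · rw [hσdef, sub_eq_zero] at hσ0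
      exact hσ0
    · exfalso
      apply hij
      have hUσ : ∀ k, U k * σ = σ * U k := by
        intro k
        simp only [hσdef, Matrix.mul_sub, Matrix.sub_mul, hcommρ k, mul_smul_comm,
          smul_mul_assoc, Matrix.mul_one, Matrix.one_mul]
      exact comm2 htrσ hσ0 (hUσ i) (hUσ j)
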